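/- arXiv:2511.10813 — 2 statements merged into one kernel-verified Lean document; each statement's English description precedes it below -/
import Mathlib

section
/- Let M be an m×r integer matrix (m ≥ 2) whose m-th row is the zero row, and let M' be the (m−1)×r matrix obtained from M by deleting that zero row. Suppose the standardized abelian Cayley graph of M' has no loops. Then the chromatic number of the standardized abelian Cayley graph of M equals the chromatic number of the standardized abelian Cayley graph of M'. -/
/-- The subgroup of `ι → ℤ` generated by the columns of `M`. -/
def colSubgroup {ι κ : Type*} (M : Matrix ι κ ℤ) : AddSubgroup (ι → ℤ) :=
  AddSubgroup.closure (Set.range fun j => fun i => M i j)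

/-- The standardized abelian Cayley graph of an integer matrix `M`. -/
def SACG {ι κ : Type*} [DecidableEq ι] (M : Matrix ι κ ℤ) :
    SimpleGraph ((ι → ℤ) ⧸ colSubgroup M) where
  Adj x y := x ≠ y ∧ ∃ i : ι,
    x - y = QuotientAddGroup.mk (Pi.single i 1) ∨
    x - y = -QuotientAddGroup.mk (Pi.single i 1)
  symm := by
    constructor
    rintro x y ⟨hne, i, h | h⟩
    · exact ⟨hne.symm, i, Or.inr (by rw [← neg_sub, h])⟩
    · exact ⟨hne.symm, i, Or.inl (by rw [← neg_sub, h, neg_neg])⟩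
  loopless := ⟨fun x h => h.1 rfl⟩

/-- The SACG of `M` has no loops: no standard basis vector lies in the
column subgroup. -/
def NoLoops {ι κ : Type*} [DecidableEq ι] (M : Matrix ι κ ℤ) : Prop :=
  ∀ i : ι, (Pi.single i 1 : ι → ℤ) ∉ colSubgroup M

namespace SACGaux

/-- Restriction to the first `m+1` coordinates. -/
def res (m : ℕ) : (Fin (m + 2) → ℤ) →+ (Fin (m + 1) → ℤ) where
  toFun v := fun i => v i.castSucc
  map_zero' := rfl
  map_add' _ _ := rfl

/-- Extension by zero in the last coordinate. -/
def ext (m : ℕ) : (Fin (m + 1) → ℤ) →+ (Fin (m + 2) → ℤ) where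
  toFun v := Fin.snoc v 0
  map_zero' := by
    funext i
    induction i using Fin.lastCases <;> simp
  map_add' a b := by
    funext i
    induction i using Fin.lastCases <;> simp

lemma res_ext (m : ℕ) (v : Fin (m + 1) → ℤ) : res m (ext m v) = v := by
  funext a
  simp [res, ext]

lemma res_single (m : ℕ) (i : Fin (m + 1)) :
    res m (Pi.single i.castSucc 1) = Pi.single i 1 := by
  funext a
  simp [res, Pi.single_apply, Fin.castSucc_inj]

lemma res_single_last (m : ℕ) :
    res m (Pi.single (Fin.last (m + 1)) 1) = 0 := by
  funext a
  simp [res, Pi.single_apply, (Fin.castSucc_lt_last a).ne]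

lemma ext_single (m : ℕ) (i : Fin (m + 1)) :
    ext m (Pi.single i 1) = Pi.single i.castSucc 1 := by
  funext a
  induction a using Fin.lastCases with
  | last => simp [ext, Pi.single_apply, ((Fin.castSucc_lt_last i).ne).symm]
  | cast a => simp [ext, Pi.single_apply, Fin.castSucc_inj]

end SACGaux

open SACGaux in
theorem chromatic_number_delete_zero_row (m r : ℕ) (M : Matrix (Fin (m + 2)) (Fin r) ℤ)
    (hzero : ∀ j, M (Fin.last (m + 1)) j = 0)
    (M' : Matrix (Fin (m + 1)) (Fin r) ℤ)
    (hM' : ∀ i j, M' i j = M i.castSucc j)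
    (hloops : NoLoops M') :
    (SACG M).chromaticNumber = (SACG M').chromaticNumber := by
  classical
  -- `res` maps the column subgroup of `M` into that of `M'`.
  have hp : colSubgroup M ≤ (colSubgroup M').comap (res m) := by
    refine (AddSubgroup.closure_le _).2 ?_
    rintro _ ⟨j, rfl⟩
    show res m (fun i => M i j) ∈ colSubgroup M'
    have h1 : res m (fun i => M i j) = fun i => M' i j :=
      funext fun a => (hM' a j).symm
    rw [h1]
    exact AddSubgroup.subset_closure ⟨j, rfl⟩
  -- `ext` maps the column subgroup of `M'` into that of `M`.
  have hj : colSubgroup M' ≤ (colSubgroup M).comap (ext m) := by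
    refine (AddSubgroup.closure_le _).2 ?_
    rintro _ ⟨j, rfl⟩
    show ext m (fun i => M' i j) ∈ colSubgroup M
    have h1 : ext m (fun i => M' i j) = fun i => M i j := by
      funext a
      induction a using Fin.lastCases with
      | last => simp [ext, hzero]
      | cast a => simp [ext, hM']
    rw [h1]
    exact AddSubgroup.subset_closure ⟨j, rfl⟩
  -- the last coordinate kills the column subgroup of `M`.
  have hl : ∀ v ∈ colSubgroup M,
      Pi.evalAddMonoidHom (fun _ : Fin (m + 2) => ℤ) (Fin.last (m + 1)) v = 0 := by
    intro v hv
    have hle' : colSubgroup M ≤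
        (Pi.evalAddMonoidHom (fun _ : Fin (m + 2) => ℤ) (Fin.last (m + 1))).ker := by
      refine (AddSubgroup.closure_le _).2 ?_
      rintro _ ⟨j, rfl⟩
      simpa [AddMonoidHom.mem_ker] using hzero j
    exact hle' hv
  set p := QuotientAddGroup.map (colSubgroup M) (colSubgroup M') (res m) hp with hpdef
  set jm := QuotientAddGroup.map (colSubgroup M') (colSubgroup M) (ext m) hj with hjdef
  set l := QuotientAddGroup.lift (colSubgroup M)
    (Pi.evalAddMonoidHom (fun _ : Fin (m + 2) => ℤ) (Fin.last (m + 1)))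
    (fun v hv => (AddMonoidHom.mem_ker).2 (hl v hv)) with hldef
  have hpj : ∀ x, p (jm x) = x := by
    intro x
    induction x using QuotientAddGroup.induction_on with
    | H v => rw [hjdef, hpdef, QuotientAddGroup.map_mk, QuotientAddGroup.map_mk, res_ext]
  have hjinj : Function.Injective jm := fun a b h => by
    rw [← hpj a, ← hpj b, h]
  have hpe : ∀ i : Fin (m + 1),
      p (QuotientAddGroup.mk (Pi.single i.castSucc 1)) =
        QuotientAddGroup.mk (Pi.single i 1) := by
    intro i
    rw [hpdef, QuotientAddGroup.map_mk, res_single]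
  have hpl : p (QuotientAddGroup.mk (Pi.single (Fin.last (m + 1)) 1)) = 0 := by
    rw [hpdef, QuotientAddGroup.map_mk, res_single_last]
    rfl
  have hje : ∀ i : Fin (m + 1),
      jm (QuotientAddGroup.mk (Pi.single i 1)) =
        QuotientAddGroup.mk (Pi.single i.castSucc 1) := by
    intro i
    rw [hjdef, QuotientAddGroup.map_mk, ext_single]
  have hle : ∀ i : Fin (m + 1),
      l (QuotientAddGroup.mk (Pi.single i.castSucc 1)) = 0 := by
    intro i
    rw [hldef, QuotientAddGroup.lift_mk]
    simp [Pi.evalAddMonoidHom, Pi.single_apply, ((Fin.castSucc_lt_last i).ne).symm]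
  have hll : l (QuotientAddGroup.mk (Pi.single (Fin.last (m + 1)) 1)) = 1 := by
    rw [hldef, QuotientAddGroup.lift_mk]
    simp [Pi.evalAddMonoidHom]
  -- `jm` is a graph homomorphism.
  have hhom : ∀ {x y}, (SACG M').Adj x y → (SACG M).Adj (jm x) (jm y) := by
    rintro x y ⟨hne, i, h | h⟩
    · refine ⟨fun he => hne (hjinj he), i.castSucc, Or.inl ?_⟩
      rw [← map_sub, h, hje]
    · refine ⟨fun he => hne (hjinj he), i.castSucc, Or.inr ?_⟩
      rw [← map_sub, h, map_neg, hje]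
  -- `SACG M'` has an edge.
  have hadj : (SACG M').Adj 0 (QuotientAddGroup.mk (Pi.single (0 : Fin (m + 1)) 1)) := by
    refine ⟨fun h => hloops 0 ?_, 0, Or.inr (by rw [zero_sub])⟩
    exact (QuotientAddGroup.eq_zero_iff _).1 h.symm
  have key : ∀ n, (SACG M).Colorable n ↔ (SACG M').Colorable n := by
    intro n
    constructor
    · rintro ⟨C⟩
      exact ⟨SimpleGraph.Coloring.mk (fun x => C (jm x)) fun h => C.valid (hhom h)⟩
    · rintro ⟨C⟩
      have hn : 2 ≤ n := by
        have hne := C.valid hadj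
        match n, C, hne with
        | 0, C, hne => exact (C 0).elim0
        | 1, C, hne => exact absurd (Subsingleton.elim _ _) hne
        | (k + 2), C, hne => omega
      obtain ⟨k, rfl⟩ : ∃ k, n = k + 2 := ⟨n - 2, by omega⟩
      haveI : Fact (1 < k + 2) := ⟨by omega⟩
      set c0 : Fin (k + 2) → ZMod (k + 2) := fun a => ((a.val : ℕ) : ZMod (k + 2)) with hc0def
      have hc0 : Function.Injective c0 := by
        intro a b h
        have h' := congrArg ZMod.val h
        rw [hc0def] at h'
        simp only [ZMod.val_cast_of_lt a.isLt, ZMod.val_cast_of_lt b.isLt] at h'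
        exact Fin.ext h'
      have Ccol : (SACG M).Coloring (ZMod (k + 2)) := by
        refine SimpleGraph.Coloring.mk
          (fun x => c0 (C (p x)) + ((l x : ℤ) : ZMod (k + 2))) ?_
        rintro x y ⟨hne, i, hi⟩ hEq
        rcases Fin.eq_castSucc_or_eq_last i with ⟨i', rfl⟩ | rfl
        · -- horizontal edge: `l` is constant, `p` gives an edge of `SACG M'`
          have hlxy : l x = l y := by
            rcases hi with h | h
            · have := congrArg l h
              rw [map_sub, hle] at this
              exact sub_eq_zero.1 this
            · have := congrArg l h
              rw [map_sub, map_neg, hle, neg_zero] at this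
              exact sub_eq_zero.1 this
          have hpne : p x ≠ p y := by
            intro hpq
            rcases hi with h | h
            · have := congrArg p h
              rw [map_sub, hpq, sub_self, hpe] at this
              exact hloops i' ((QuotientAddGroup.eq_zero_iff _).1 this.symm)
            · have := congrArg p h
              rw [map_sub, hpq, sub_self, map_neg, hpe] at this
              have : (QuotientAddGroup.mk (Pi.single i' 1) :
                  (Fin (m + 1) → ℤ) ⧸ colSubgroup M') = 0 := by
                rw [← neg_neg (QuotientAddGroup.mk (Pi.single i' 1) :
                  (Fin (m + 1) → ℤ) ⧸ colSubgroup M'), ← this, neg_zero]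
              exact hloops i' ((QuotientAddGroup.eq_zero_iff _).1 this)
          have hadj' : (SACG M').Adj (p x) (p y) := by
            refine ⟨hpne, i', ?_⟩
            rcases hi with h | h
            · left
              have := congrArg p h
              rwa [map_sub, hpe] at this
            · right
              have := congrArg p h
              rwa [map_sub, map_neg, hpe] at this
          have hc := C.valid hadj'
          rw [hlxy] at hEq
          exact hc (hc0 (add_right_cancel hEq))
        · -- vertical edge: `p` is constant, `l` changes by `±1`
          have hpxy : p x = p y := by
            rcases hi with h | h
            · have := congrArg p h
              rw [map_sub, hpl] at this
              exact sub_eq_zero.1 this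
            · have := congrArg p h
              rw [map_sub, map_neg, hpl, neg_zero] at this
              exact sub_eq_zero.1 this
          have hlv : l x - l y = 1 ∨ l x - l y = -1 := by
            rcases hi with h | h
            · left
              have := congrArg l h
              rwa [map_sub, hll] at this
            · right
              have := congrArg l h
              rwa [map_sub, map_neg, hll] at this
          rw [hpxy] at hEq
          have h2 : ((l x : ℤ) : ZMod (k + 2)) = ((l y : ℤ) : ZMod (k + 2)) :=
            add_left_cancel hEq
          have h3 : ((l x - l y : ℤ) : ZMod (k + 2)) = 0 := by
            push_cast
            rw [h2]
            ring
          rcases hlv with h | h <;> rw [h] at h3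
          · exact one_ne_zero (by exact_mod_cast h3)
          · exact one_ne_zero (neg_eq_zero.1 (by exact_mod_cast h3))
      have := Ccol.colorable
      rwa [ZMod.card] at this
  have hset : Set.ofPred (SACG M).Colorable = Set.ofPred (SACG M').Colorable :=
    Set.ext key
  rw [SimpleGraph.chromaticNumber, SimpleGraph.chromaticNumber, hset]
end

section
/- (Three-Divisible Row Lemma) Let k₁, k₂, y₂₁, y₂₂, y₃₁, y₃₂ be integers and let M be the 3×2 integer matrix with rows (3k₁, 3k₂), (y₂₁, y₂₂), (y₃₁, y₃₂). Suppose M has no zero rows and the standardized abelian Cayley graph X of M has no loops. Then the chromatic number of X is at most 3. -/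
/-- Middle third predicate. -/
def Mid (r : ℚ) : Prop := 1/3 ≤ Int.fract r ∧ Int.fract r ≤ 2/3

lemma mid_neg {r : ℚ} (h : Mid r) : Mid (-r) := by
  obtain ⟨h1, h2⟩ := h
  have hne : Int.fract r ≠ 0 := by positivity
  rw [Mid, Int.fract_neg hne]
  constructor <;> linarith

lemma mid_of_fract_eq {r s : ℚ} (h : Int.fract r = Int.fract s) (hs : Mid s) : Mid r := by
  rw [Mid, h]; exact hs

/-- a value j/n with n ≤ 3j ≤ 2n is in the middle third -/
lemma mid_div {j n : ℤ} (hn : 0 < n) (h1 : n ≤ 3*j) (h2 : 3*j ≤ 2*n) :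
    Mid ((j : ℚ)/(n : ℚ)) := by
  have hn' : (0:ℚ) < n := by exact_mod_cast hn
  have hb : (0:ℚ) ≤ (j:ℚ)/n ∧ (j:ℚ)/n < 1 := by
    constructor
    · apply div_nonneg _ hn'.le
      have : (0:ℤ) ≤ j := by omega
      exact_mod_cast this
    · rw [div_lt_one hn']
      have : j < n := by omega
      exact_mod_cast this
  rw [Mid, Int.fract_eq_self.mpr hb]
  constructor
  · rw [le_div_iff₀ hn']
    have : (n:ℚ) ≤ 3*j := by exact_mod_cast h1
    linarith
  · rw [div_le_iff₀ hn']
    have : (3:ℚ)*j ≤ 2*n := by exact_mod_cast h2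
    linarith

/-- shift lemma -/
lemma mid_shift (r : ℚ) : ∃ j : ℤ, Mid (r + j/3) := by
  have h0 : 0 ≤ Int.fract r := Int.fract_nonneg r
  have h1 : Int.fract r < 1 := Int.fract_lt_one r
  have key : ∀ s : ℚ, 0 ≤ s → s < 1 → Int.fract (r + s) = Int.fract (Int.fract r + s) := by
    intro s _ _
    conv_lhs => rw [← Int.floor_add_fract r]
    rw [add_assoc, Int.fract_intCast_add]
  rcases lt_or_ge (Int.fract r) (1/3) with h | h
  · refine ⟨1, ?_⟩
    have hc : ((1:ℤ):ℚ)/3 = 1/3 := by norm_num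
    have : Int.fract (r + 1/3) = Int.fract r + 1/3 := by
      rw [key (1/3) (by norm_num) (by norm_num), Int.fract_eq_self.mpr ⟨by linarith, by linarith⟩]
    rw [Mid, hc, this]; constructor <;> linarith
  rcases le_or_gt (Int.fract r) (2/3) with h' | h'
  · refine ⟨0, ?_⟩
    have hc : r + ((0:ℤ):ℚ)/3 = r := by norm_num
    rw [Mid, hc]; exact ⟨h, h'⟩
  · refine ⟨2, ?_⟩
    have hc : ((2:ℤ):ℚ)/3 = 2/3 := by norm_num
    have : Int.fract (r + 2/3) = Int.fract r - 1/3 := by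
      rw [key (2/3) (by norm_num) (by norm_num)]
      have : Int.fract r + 2/3 = (1:ℤ) + (Int.fract r - 1/3) := by push_cast; ring
      rw [this, Int.fract_intCast_add, Int.fract_eq_self.mpr ⟨by linarith, by linarith⟩]
    rw [Mid, hc, this]; constructor <;> linarith

/-- which third of [0,1) the fractional part lies in -/
def third (r : ℚ) : Fin 3 :=
  if Int.fract r < 1/3 then 0 else if Int.fract r < 2/3 then 1 else 2

lemma third_eq_of_fract_eq {r s : ℚ} (h : Int.fract r = Int.fract s) : third r = third s := by
  unfold third; rw [h]

lemma third_ne {r s : ℚ} (h : Mid (r - s)) : third r ≠ third s := by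
  intro heq
  obtain ⟨hm1, hm2⟩ := h
  have h0r : 0 ≤ Int.fract r := Int.fract_nonneg r
  have h1r : Int.fract r < 1 := Int.fract_lt_one r
  have h0s : 0 ≤ Int.fract s := Int.fract_nonneg s
  have h1s : Int.fract s < 1 := Int.fract_lt_one s
  have hd : |Int.fract r - Int.fract s| < 1/3 := by
    unfold third at heq
    split_ifs at heq with a b c d e <;>
      first
        | exact absurd heq (by decide)
        | (rw [abs_lt]; constructor <;> linarith)
  set d := Int.fract r - Int.fract s with hdd
  have hrs : r - s = d + ((Int.floor r - Int.floor s : ℤ) : ℚ) := by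
    have hr := Int.floor_add_fract r
    have hs := Int.floor_add_fract s
    push_cast
    linarith
  have hfr : Int.fract (r - s) = Int.fract d := by
    rw [hrs, Int.fract_add_intCast]
  rw [abs_lt] at hd
  rcases le_or_gt 0 d with hd0 | hd0
  · rw [hfr, Int.fract_eq_self.mpr ⟨hd0, by linarith⟩] at hm1
    linarith
  · have h2 : Int.fract (d + ((1:ℤ):ℚ)) = d + 1 := by
      have e1 : d + ((1:ℤ):ℚ) = d + 1 := by push_cast; ring
      rw [e1]
      exact Int.fract_eq_self.mpr ⟨by linarith, by linarith⟩
    have h3 : Int.fract d = d + 1 := by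
      rw [← Int.fract_add_intCast d (1:ℤ), h2]
    rw [hfr, h3] at hm2
    linarith

lemma exists_mid_multiple {x : ℚ} (hx : ¬ ∃ n : ℤ, x = (n:ℚ)) : ∃ m : ℤ, Mid ((m:ℚ) * x) := by
  have hden : 2 ≤ x.den := by
    by_contra hcon
    push_neg at hcon
    have hpos := x.pos
    have h1 : x.den = 1 := by omega
    have h2 := Rat.num_div_den x
    rw [h1] at h2
    simp at h2
    exact hx ⟨x.num, h2.symm⟩
  set n : ℤ := (x.den : ℤ) with hn
  have hn2 : 2 ≤ n := by rw [hn]; exact_mod_cast hden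
  obtain ⟨j, hj1, hj2⟩ : ∃ j : ℤ, n ≤ 3*j ∧ 3*j ≤ 2*n := ⟨(n+2)/3, by omega, by omega⟩
  have hcop : Int.gcd x.num n = 1 := x.reduced
  have hbez := Int.gcd_eq_gcd_ab x.num n
  rw [hcop] at hbez
  set A := Int.gcdA x.num n
  set B := Int.gcdB x.num n
  refine ⟨j * A, ?_⟩
  have hnq : ((n:ℚ)) ≠ 0 := by
    have : (0:ℤ) < n := by omega
    positivity
  have hxval : x = (x.num : ℚ) / (n : ℚ) := by rw [hn]; push_cast; exact (Rat.num_div_den x).symm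
  have key : ((j*A : ℤ):ℚ) * x = (j:ℚ)/(n:ℚ) + ((-(j*B) : ℤ) : ℚ) := by
    rw [hxval]
    have hAnum : (A:ℚ) * (x.num:ℚ) = 1 - (n:ℚ)*(B:ℚ) := by
      have : (1:ℤ) = x.num * A + n * B := by exact_mod_cast hbez
      have := congrArg (fun z : ℤ => (z:ℚ)) this
      push_cast at this
      linarith
    push_cast
    field_simp
    linear_combination (j:ℚ) * hAnum
  have : Int.fract (((j*A : ℤ):ℚ) * x) = Int.fract ((j:ℚ)/(n:ℚ)) := by
    rw [key, Int.fract_add_intCast]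
  exact mid_of_fract_eq this (mid_div (by omega) hj1 hj2)

lemma mid_third_nondvd {c : ℤ} (h : ¬ (3 ∣ c)) : Mid ((c:ℚ)/3) := by
  have hc : (c:ℚ)/3 = ((c % 3 : ℤ):ℚ)/(((3:ℤ)):ℚ) + ((c / 3 : ℤ):ℚ) := by
    have : c = 3 * (c / 3) + c % 3 := by omega
    rw [(by exact_mod_cast congrArg (fun z : ℤ => (z:ℚ)) this :
      (c:ℚ) = 3*((c/3 : ℤ):ℚ) + ((c % 3:ℤ):ℚ))]
    push_cast
    ring
  have hf : Int.fract ((c:ℚ)/3) = Int.fract (((c % 3 : ℤ):ℚ)/(((3:ℤ)):ℚ)) := by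
    rw [hc, Int.fract_add_intCast]
  exact mid_of_fract_eq hf (mid_div (by norm_num) (by omega) (by omega))

lemma twospeed_aux (p q : ℤ) (hp : 0 < p) (hq : 0 < q)
    (h3 : 3 ∣ p / (Int.gcd p q : ℤ)) : ∃ t : ℚ, Mid (t * p) ∧ Mid (t * q) := by
  set g : ℤ := (Int.gcd p q : ℤ) with hg
  have hgcdpos : 0 < Int.gcd p q := Int.gcd_pos_of_ne_zero_left q hp.ne'
  have hgpos : 0 < g := by rw [hg]; exact_mod_cast hgcdpos
  set p₁ : ℤ := p / g with hp₁def
  set q₁ : ℤ := q / g with hq₁def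
  have hpe : p = g * p₁ := by
    rw [hp₁def, hg, Int.mul_ediv_cancel' (Int.gcd_dvd_left p q)]
  have hqe : q = g * q₁ := by
    rw [hq₁def, hg, Int.mul_ediv_cancel' (Int.gcd_dvd_right p q)]
  have hp₁pos : 0 < p₁ := by nlinarith
  have hq₁pos : 0 < q₁ := by nlinarith
  have hcop : Int.gcd p₁ q₁ = 1 := by
    rw [hp₁def, hq₁def, hg]
    exact Int.gcd_div_gcd_div_gcd hgcdpos
  obtain ⟨P, hP⟩ : ∃ P, p₁ = 3 * P := h3
  have hPpos : 0 < P := by omega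
  have hq13 : ¬ (3:ℤ) ∣ q₁ := by
    intro hdvd
    have h3p : (3:ℤ) ∣ p₁ := ⟨P, hP⟩
    have hh := Int.dvd_gcd h3p hdvd
    rw [hcop] at hh
    norm_num at hh
  have hbez := Int.gcd_eq_gcd_ab q₁ p₁
  rw [Int.gcd_comm, hcop] at hbez
  set A := Int.gcdA q₁ p₁ with hA
  set B := Int.gcdB q₁ p₁ with hB
  have hbez' : q₁ * A + p₁ * B = 1 := by exact_mod_cast hbez.symm
  set r : ℤ := q₁ % 3 with hr
  have hr12 : r = 1 ∨ r = 2 := by omega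
  set z : ℤ := P - q₁ / 3 with hz
  have h3z : 3 * z = (3*P + r) - q₁ := by omega
  set y : ℤ := z * A with hy
  set n : ℤ := q₁ + 3 * q₁ * y with hn
  have hqA : q₁ * A = 1 - 3 * P * B := by
    rw [hP] at hbez'
    linarith
  have hkey : n = (3*P + r) - 9*P*(z*B) := by
    have h1 : 3 * q₁ * y = 3*z - 9*P*(z*B) := by
      rw [hy]
      linear_combination 3 * z * hqA
    linarith [h1, h3z]
  -- the magic t
  refine ⟨(n:ℚ)/(9*(P:ℚ)*(q₁:ℚ)*(g:ℚ)), ?_, ?_⟩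
  · -- t * p = 1/3 + y
    have hPq : ((P:ℚ)) ≠ 0 := by positivity
    have hqq : ((q₁:ℚ)) ≠ 0 := by
      have : (0:ℚ) < q₁ := by exact_mod_cast hq₁pos
      positivity
    have hgq : ((g:ℚ)) ≠ 0 := by
      have : (0:ℚ) < g := by exact_mod_cast hgpos
      positivity
    have ht : (n:ℚ)/(9*(P:ℚ)*(q₁:ℚ)*(g:ℚ)) * (p:ℚ) = ((1:ℤ):ℚ)/(((3:ℤ)):ℚ) + ((y:ℤ):ℚ) := by
      have hpq : (p:ℚ) = (g:ℚ) * (3 * (P:ℚ)) := by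
        rw [hpe, hP]; push_cast; ring
      have hnq : (n:ℚ) = (q₁:ℚ) + 3 * (q₁:ℚ) * (y:ℚ) := by
        rw [hn]; push_cast; ring
      rw [hpq, hnq]
      push_cast
      field_simp
      ring
    have hf : Int.fract ((n:ℚ)/(9*(P:ℚ)*(q₁:ℚ)*(g:ℚ)) * (p:ℚ))
        = Int.fract (((1:ℤ):ℚ)/(((3:ℤ)):ℚ)) := by
      rw [ht, Int.fract_add_intCast]
    exact mid_of_fract_eq hf (mid_div (by norm_num) (by norm_num) (by norm_num))
  · -- t * q = r₂/(9P) - zB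
    have ht : (n:ℚ)/(9*(P:ℚ)*(q₁:ℚ)*(g:ℚ)) * (q:ℚ)
        = ((3*P + r : ℤ):ℚ)/(((9*P:ℤ)):ℚ) + ((-(z*B):ℤ):ℚ) := by
      have hqq2 : (q:ℚ) = (g:ℚ) * (q₁:ℚ) := by rw [hqe]; push_cast; ring
      have hnq : (n:ℚ) = ((3*P + r : ℤ):ℚ) - 9*(P:ℚ)*((z*B : ℤ):ℚ) := by
        rw [hkey]; push_cast; ring
      have hPq : ((P:ℚ)) ≠ 0 := by positivity
      have hqql : ((q₁:ℚ)) ≠ 0 := by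
        have : (0:ℚ) < q₁ := by exact_mod_cast hq₁pos
        positivity
      have hgq : ((g:ℚ)) ≠ 0 := by
        have : (0:ℚ) < g := by exact_mod_cast hgpos
        positivity
      rw [hqq2, hnq]
      push_cast
      field_simp
      ring
    have hf : Int.fract ((n:ℚ)/(9*(P:ℚ)*(q₁:ℚ)*(g:ℚ)) * (q:ℚ))
        = Int.fract (((3*P + r : ℤ):ℚ)/(((9*P:ℤ)):ℚ)) := by
      rw [ht, Int.fract_add_intCast]
    exact mid_of_fract_eq hf (mid_div (by omega) (by omega) (by omega))

lemma twospeed_pos (p q : ℤ) (hp : 0 < p) (hq : 0 < q) :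
    ∃ t : ℚ, Mid (t * p) ∧ Mid (t * q) := by
  set g : ℤ := (Int.gcd p q : ℤ) with hg
  have hgcdpos : 0 < Int.gcd p q := Int.gcd_pos_of_ne_zero_left q hp.ne'
  have hgpos : 0 < g := by rw [hg]; exact_mod_cast hgcdpos
  set p₁ : ℤ := p / g with hp₁def
  set q₁ : ℤ := q / g with hq₁def
  by_cases h3p : (3:ℤ) ∣ p₁
  · exact twospeed_aux p q hp hq h3p
  by_cases h3q : (3:ℤ) ∣ q₁
  · have h3q' : (3:ℤ) ∣ q / (Int.gcd q p : ℤ) := by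
      rwa [Int.gcd_comm q p]
    obtain ⟨t, h1, h2⟩ := twospeed_aux q p hq hp h3q'
    exact ⟨t, h2, h1⟩
  · -- neither divisible by 3 : t = 1/(3g)
    have hpe : p = g * p₁ := by
      rw [hp₁def, hg, Int.mul_ediv_cancel' (Int.gcd_dvd_left p q)]
    have hqe : q = g * q₁ := by
      rw [hq₁def, hg, Int.mul_ediv_cancel' (Int.gcd_dvd_right p q)]
    have hgq : ((g:ℚ)) ≠ 0 := by
      have : (0:ℚ) < g := by exact_mod_cast hgpos
      positivity
    refine ⟨1/(3*(g:ℚ)), ?_, ?_⟩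
    · have ht : 1/(3*(g:ℚ)) * (p:ℚ) = (p₁:ℚ)/3 := by
        rw [hpe]; push_cast; field_simp
      rw [ht]; exact mid_third_nondvd h3p
    · have ht : 1/(3*(g:ℚ)) * (q:ℚ) = (q₁:ℚ)/3 := by
        rw [hqe]; push_cast; field_simp
      rw [ht]; exact mid_third_nondvd h3q

lemma twospeed (p q : ℤ) (hp : p ≠ 0) (hq : q ≠ 0) :
    ∃ t : ℚ, Mid (t * p) ∧ Mid (t * q) := by
  obtain ⟨t, h1, h2⟩ := twospeed_pos |p| |q| (by positivity) (by positivity)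
  refine ⟨t, ?_, ?_⟩
  · rcases abs_choice p with h | h
    · rwa [h] at h1
    · rw [h] at h1
      have := mid_neg h1
      have e : -(t * ((-p : ℤ):ℚ)) = t * p := by push_cast; ring
      rwa [e] at this
  · rcases abs_choice q with h | h
    · rwa [h] at h2
    · rw [h] at h2
      have := mid_neg h2
      have e : -(t * ((-q : ℤ):ℚ)) = t * q := by push_cast; ring
      rwa [e] at this

/-! ### Vector algebra on `Fin 3` -/

def dotZ (a b : Fin 3 → ℤ) : ℤ := a 0 * b 0 + a 1 * b 1 + a 2 * b 2

def crZ (a b : Fin 3 → ℤ) : Fin 3 → ℤ :=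
  ![a 1 * b 2 - a 2 * b 1, a 2 * b 0 - a 0 * b 2, a 0 * b 1 - a 1 * b 0]

def dotQ (a b : Fin 3 → ℚ) : ℚ := a 0 * b 0 + a 1 * b 1 + a 2 * b 2

def icast (a : Fin 3 → ℤ) : Fin 3 → ℚ := fun i => (a i : ℚ)

def IsInt (r : ℚ) : Prop := ∃ n : ℤ, r = (n:ℚ)

lemma crZ0 (a b : Fin 3 → ℤ) : crZ a b 0 = a 1 * b 2 - a 2 * b 1 := rfl
lemma crZ1 (a b : Fin 3 → ℤ) : crZ a b 1 = a 2 * b 0 - a 0 * b 2 := rfl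
lemma crZ2 (a b : Fin 3 → ℤ) : crZ a b 2 = a 0 * b 1 - a 1 * b 0 := rfl

lemma ortho1 (a b : Fin 3 → ℤ) : dotZ (crZ a b) a = 0 := by
  simp [dotZ, crZ0, crZ1, crZ2]; ring

lemma ortho2 (a b : Fin 3 → ℤ) : dotZ (crZ a b) b = 0 := by
  simp [dotZ, crZ0, crZ1, crZ2]; ring

lemma cyc (a b c : Fin 3 → ℤ) : dotZ (crZ a b) c = dotZ (crZ b c) a := by
  simp [dotZ, crZ0, crZ1, crZ2]; ring

/-- The key expansion identity. -/
lemma key_identity (a b u : Fin 3 → ℤ) (i : Fin 3) :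
    dotZ (crZ a b) (crZ a b) * u i =
      dotZ (crZ u b) (crZ a b) * a i + dotZ (crZ a u) (crZ a b) * b i +
        dotZ u (crZ a b) * crZ a b i := by
  fin_cases i <;> · simp [dotZ, crZ0, crZ1, crZ2]; ring

lemma sep_core (c1 c2 u w : Fin 3 → ℤ) (N R : ℤ) (hN : N ≠ 0) (hR : ¬ N ∣ R)
    (hw1 : dotZ w c1 = N) (hw2 : dotZ w c2 = 0) (hwu : dotZ w u = R) :
    ∃ χ : Fin 3 → ℚ, IsInt (dotQ χ (icast c1)) ∧ IsInt (dotQ χ (icast c2)) ∧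
      Mid (dotQ χ (icast u)) := by
  have hNq : ((N:ℚ)) ≠ 0 := by exact_mod_cast hN
  have hx : ¬ ∃ n : ℤ, (R:ℚ)/(N:ℚ) = (n:ℚ) := by
    rintro ⟨n, hn⟩
    rw [div_eq_iff hNq] at hn
    refine hR ⟨n, ?_⟩
    rw [mul_comm]
    exact_mod_cast hn
  obtain ⟨m, hm⟩ := exists_mid_multiple hx
  refine ⟨fun i => (m:ℚ)/(N:ℚ) * ((w i : ℤ):ℚ), ?_, ?_, ?_⟩
  · refine ⟨m, ?_⟩
    have : dotQ (fun i => (m:ℚ)/(N:ℚ) * ((w i : ℤ):ℚ)) (icast c1)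
        = (m:ℚ)/(N:ℚ) * ((dotZ w c1 : ℤ):ℚ) := by
      simp only [dotQ, dotZ, icast]; push_cast; ring
    rw [this, hw1]
    field_simp
  · refine ⟨0, ?_⟩
    have : dotQ (fun i => (m:ℚ)/(N:ℚ) * ((w i : ℤ):ℚ)) (icast c2)
        = (m:ℚ)/(N:ℚ) * ((dotZ w c2 : ℤ):ℚ) := by
      simp only [dotQ, dotZ, icast]; push_cast; ring
    rw [this, hw2]
    norm_num
  · have : dotQ (fun i => (m:ℚ)/(N:ℚ) * ((w i : ℤ):ℚ)) (icast u)
        = (m:ℚ) * ((R:ℚ)/(N:ℚ)) := by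
      have h1 : dotQ (fun i => (m:ℚ)/(N:ℚ) * ((w i : ℤ):ℚ)) (icast u)
          = (m:ℚ)/(N:ℚ) * ((dotZ w u : ℤ):ℚ) := by
        simp only [dotQ, dotZ, icast]; push_cast; ring
      rw [h1, hwu]
      field_simp
    rwa [this]

lemma sep (c1 c2 u : Fin 3 → ℤ)
    (hN : dotZ (crZ c1 c2) (crZ c1 c2) ≠ 0)
    (huv : dotZ u (crZ c1 c2) = 0)
    (hu : ¬ ∃ a b : ℤ, ∀ i, u i = a * c1 i + b * c2 i) :
    ∃ χ : Fin 3 → ℚ, IsInt (dotQ χ (icast c1)) ∧ IsInt (dotQ χ (icast c2)) ∧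
      Mid (dotQ χ (icast u)) := by
  set v := crZ c1 c2 with hv
  set N := dotZ v v with hNdef
  set P := dotZ (crZ u c2) v with hP
  set Q := dotZ (crZ c1 u) v with hQ
  have hid : ∀ i, N * u i = P * c1 i + Q * c2 i := by
    intro i
    have := key_identity c1 c2 u i
    rw [← hv, ← hNdef, ← hP, ← hQ, huv] at this
    linarith [this]
  have hnd : ¬ (N ∣ P ∧ N ∣ Q) := by
    rintro ⟨⟨a, ha⟩, ⟨b, hb⟩⟩
    refine hu ⟨a, b, fun i => ?_⟩
    have h := hid i
    rw [ha, hb] at h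
    have : N * u i = N * (a * c1 i + b * c2 i) := by linarith [h]
    exact mul_left_cancel₀ hN this
  by_cases hNP : N ∣ P
  · have hNQ : ¬ N ∣ Q := fun h => hnd ⟨hNP, h⟩
    -- use w' := crZ v c1, pairing: w'·c1 = 0, w'·c2 = N, w'·u = Q
    obtain ⟨χ, i1, i2, i3⟩ := sep_core c2 c1 u (crZ v c1) N Q hN hNQ
      (by rw [cyc v c1 c2])
      (ortho2 v c1)
      (by rw [cyc v c1 u])
    exact ⟨χ, i2, i1, i3⟩
  · -- use w := crZ c2 v
    exact sep_core c1 c2 u (crZ c2 v) N P hN hNP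
      (by rw [cyc c2 v c1, cyc v c1 c2])
      (ortho1 c2 v)
      (by rw [cyc c2 v u, cyc v u c2])

lemma mid_half : Mid ((1:ℚ)/2) := by
  have : Int.fract ((1:ℚ)/2) = 1/2 := Int.fract_eq_self.mpr ⟨by norm_num, by norm_num⟩
  rw [Mid, this]
  norm_num

lemma exists_beta (c1 c2 : Fin 3 → ℤ)
    (hrow : ∀ i : Fin 3, c1 i ≠ 0 ∨ c2 i ≠ 0)
    (h1 : ¬ ∃ a b : ℤ, ∀ i, (Pi.single 1 1 : Fin 3 → ℤ) i = a * c1 i + b * c2 i)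
    (h2 : ¬ ∃ a b : ℤ, ∀ i, (Pi.single 2 1 : Fin 3 → ℤ) i = a * c1 i + b * c2 i) :
    ∃ β : Fin 3 → ℚ, IsInt (dotQ β (icast c1)) ∧ IsInt (dotQ β (icast c2)) ∧
      Mid (β 1) ∧ Mid (β 2) := by
  set v := crZ c1 c2 with hv
  have hoc1 : v 0 * c1 0 + v 1 * c1 1 + v 2 * c1 2 = 0 := ortho1 c1 c2
  have hoc2 : v 0 * c2 0 + v 1 * c2 1 + v 2 * c2 2 = 0 := ortho2 c1 c2
  by_cases hv1 : v 1 = 0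
  · by_cases hv2 : v 2 = 0
    · by_cases hv0 : v 0 = 0
      · -- fully degenerate: columns proportional
        have hv0' : c1 1 * c2 2 - c1 2 * c2 1 = 0 := by rw [← crZ0 c1 c2]; exact hv0
        have hz : (c1 1 ≠ 0 ∧ c1 2 ≠ 0) ∨ (c2 1 ≠ 0 ∧ c2 2 ≠ 0) := by
          rcases Classical.em (c1 1 = 0) with a | a
          · right
            have hc21 : c2 1 ≠ 0 := by
              rcases hrow 1 with h | h
              · exact absurd a h
              · exact h
            have hc12 : c1 2 = 0 := by
              have : c1 2 * c2 1 = 0 := by rw [a] at hv0'; linarith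
              rcases mul_eq_zero.mp this with h | h
              · exact h
              · exact absurd h hc21
            have hc22 : c2 2 ≠ 0 := by
              rcases hrow 2 with h | h
              · exact absurd hc12 h
              · exact h
            exact ⟨hc21, hc22⟩
          · rcases Classical.em (c1 2 = 0) with b | b
            · exfalso
              have hc22 : c2 2 ≠ 0 := by
                rcases hrow 2 with h | h
                · exact absurd b h
                · exact h
              have : c1 1 * c2 2 = 0 := by rw [b] at hv0'; linarith
              rcases mul_eq_zero.mp this with h | h
              · exact a h
              · exact hc22 h
            · exact Or.inl ⟨a, b⟩
        -- choose the column z with nonzero coords 1 and 2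
        rcases hz with ⟨hz1, hz2⟩ | ⟨hz1, hz2⟩
        · obtain ⟨t, ht1, ht2⟩ := twospeed (c1 2) (c1 1) hz2 hz1
          refine ⟨![0, t * ((c1 2 : ℤ):ℚ), -(t * ((c1 1 : ℤ):ℚ))], ⟨0, ?_⟩, ⟨0, ?_⟩, ?_, ?_⟩
          · show (0:ℚ) * _ + t * ((c1 2 : ℤ):ℚ) * _ + -(t * ((c1 1 : ℤ):ℚ)) * _ = ((0:ℤ):ℚ)
            simp only [icast]
            push_cast
            ring
          · show (0:ℚ) * _ + t * ((c1 2 : ℤ):ℚ) * _ + -(t * ((c1 1 : ℤ):ℚ)) * _ = ((0:ℤ):ℚ)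
            simp only [icast]
            have hc : ((c1 1 : ℤ):ℚ) * ((c2 2 : ℤ):ℚ) - ((c1 2 : ℤ):ℚ) * ((c2 1 : ℤ):ℚ) = 0 := by
              exact_mod_cast congrArg (fun z : ℤ => (z:ℚ)) hv0'
            push_cast
            push_cast at hc
            linear_combination (-t) * hc
          · show Mid (t * ((c1 2 : ℤ):ℚ))
            exact ht1
          · show Mid (-(t * ((c1 1 : ℤ):ℚ)))
            exact mid_neg ht2
        · obtain ⟨t, ht1, ht2⟩ := twospeed (c2 2) (c2 1) hz2 hz1
          refine ⟨![0, t * ((c2 2 : ℤ):ℚ), -(t * ((c2 1 : ℤ):ℚ))], ⟨0, ?_⟩, ⟨0, ?_⟩, ?_, ?_⟩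
          · show (0:ℚ) * _ + t * ((c2 2 : ℤ):ℚ) * _ + -(t * ((c2 1 : ℤ):ℚ)) * _ = ((0:ℤ):ℚ)
            simp only [icast]
            have hc : ((c1 1 : ℤ):ℚ) * ((c2 2 : ℤ):ℚ) - ((c1 2 : ℤ):ℚ) * ((c2 1 : ℤ):ℚ) = 0 := by
              exact_mod_cast congrArg (fun z : ℤ => (z:ℚ)) hv0'
            push_cast
            push_cast at hc
            linear_combination t * hc
          · show (0:ℚ) * _ + t * ((c2 2 : ℤ):ℚ) * _ + -(t * ((c2 1 : ℤ):ℚ)) * _ = ((0:ℤ):ℚ)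
            simp only [icast]
            push_cast
            ring
          · show Mid (t * ((c2 2 : ℤ):ℚ))
            exact ht1
          · show Mid (-(t * ((c2 1 : ℤ):ℚ)))
            exact mid_neg ht2
      · -- v 1 = v 2 = 0, v 0 ≠ 0 : contradiction with row 0
        exfalso
        have e1 : c1 0 * v 0 = 0 := by rw [hv1, hv2] at hoc1; linarith
        have e2 : c2 0 * v 0 = 0 := by rw [hv1, hv2] at hoc2; linarith
        rcases hrow 0 with h | h
        · exact h (by rcases mul_eq_zero.mp e1 with h' | h' <;> [exact h'; exact absurd h' hv0])
        · exact h (by rcases mul_eq_zero.mp e2 with h' | h' <;> [exact h'; exact absurd h' hv0])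
    · -- v 1 = 0, v 2 ≠ 0 : use separation at e₁, then fix coordinate 2
      have hN : dotZ v v ≠ 0 := by
        have h2sq : 0 < v 2 * v 2 := mul_self_pos.mpr hv2
        have : dotZ v v = v 0 * v 0 + v 1 * v 1 + v 2 * v 2 := rfl
        intro hcon
        rw [this] at hcon
        nlinarith [mul_self_nonneg (v 0), mul_self_nonneg (v 1)]
      have huv : dotZ (Pi.single 1 1 : Fin 3 → ℤ) v = 0 := by
        have : dotZ (Pi.single 1 1 : Fin 3 → ℤ) v = v 1 := by
          simp [dotZ, Pi.single_apply]
        rw [this, hv1]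
      obtain ⟨χ, i1, i2, i3⟩ := sep c1 c2 (Pi.single 1 1) (by rw [← hv]; exact hN) (by rw [← hv]; exact huv) h1
      have hχ1 : dotQ χ (icast (Pi.single 1 1)) = χ 1 := by
        simp [dotQ, icast, Pi.single_apply]
      rw [hχ1] at i3
      set t : ℚ := ((1:ℚ)/2 - χ 2)/((v 2 : ℤ):ℚ) with htdef
      have hv2q : ((v 2 : ℤ):ℚ) ≠ 0 := by exact_mod_cast hv2
      refine ⟨fun i => χ i + t * ((v i : ℤ):ℚ), ?_, ?_, ?_, ?_⟩
      · obtain ⟨n, hn⟩ := i1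
        refine ⟨n, ?_⟩
        have expand : dotQ (fun i => χ i + t * ((v i : ℤ):ℚ)) (icast c1)
            = dotQ χ (icast c1) + t * ((dotZ v c1 : ℤ):ℚ) := by
          simp only [dotQ, dotZ, icast]; push_cast; ring
        rw [expand, (by rw [hv]; exact ortho1 c1 c2 : dotZ v c1 = 0), hn]
        push_cast
        ring
      · obtain ⟨n, hn⟩ := i2
        refine ⟨n, ?_⟩
        have expand : dotQ (fun i => χ i + t * ((v i : ℤ):ℚ)) (icast c2)
            = dotQ χ (icast c2) + t * ((dotZ v c2 : ℤ):ℚ) := by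
          simp only [dotQ, dotZ, icast]; push_cast; ring
        rw [expand, (by rw [hv]; exact ortho2 c1 c2 : dotZ v c2 = 0), hn]
        push_cast
        ring
      · show Mid (χ 1 + t * ((v 1 : ℤ):ℚ))
        rw [hv1]
        simpa using i3
      · show Mid (χ 2 + t * ((v 2 : ℤ):ℚ))
        have : χ 2 + t * ((v 2 : ℤ):ℚ) = 1/2 := by
          rw [htdef]
          field_simp
          ring
        rw [this]
        exact mid_half
  · by_cases hv2 : v 2 = 0
    · -- v 1 ≠ 0, v 2 = 0 : separation at e₂, fix coordinate 1
      have hN : dotZ v v ≠ 0 := by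
        have h1sq : 0 < v 1 * v 1 := mul_self_pos.mpr hv1
        have : dotZ v v = v 0 * v 0 + v 1 * v 1 + v 2 * v 2 := rfl
        intro hcon
        rw [this] at hcon
        nlinarith [mul_self_nonneg (v 0), mul_self_nonneg (v 2)]
      have huv : dotZ (Pi.single 2 1 : Fin 3 → ℤ) v = 0 := by
        have : dotZ (Pi.single 2 1 : Fin 3 → ℤ) v = v 2 := by
          simp [dotZ, Pi.single_apply]
        rw [this, hv2]
      obtain ⟨χ, i1, i2, i3⟩ := sep c1 c2 (Pi.single 2 1) (by rw [← hv]; exact hN) (by rw [← hv]; exact huv) h2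
      have hχ2 : dotQ χ (icast (Pi.single 2 1)) = χ 2 := by
        simp [dotQ, icast, Pi.single_apply]
      rw [hχ2] at i3
      set t : ℚ := ((1:ℚ)/2 - χ 1)/((v 1 : ℤ):ℚ) with htdef
      have hv1q : ((v 1 : ℤ):ℚ) ≠ 0 := by exact_mod_cast hv1
      refine ⟨fun i => χ i + t * ((v i : ℤ):ℚ), ?_, ?_, ?_, ?_⟩
      · obtain ⟨n, hn⟩ := i1
        refine ⟨n, ?_⟩
        have expand : dotQ (fun i => χ i + t * ((v i : ℤ):ℚ)) (icast c1)
            = dotQ χ (icast c1) + t * ((dotZ v c1 : ℤ):ℚ) := by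
          simp only [dotQ, dotZ, icast]; push_cast; ring
        rw [expand, (by rw [hv]; exact ortho1 c1 c2 : dotZ v c1 = 0), hn]
        push_cast
        ring
      · obtain ⟨n, hn⟩ := i2
        refine ⟨n, ?_⟩
        have expand : dotQ (fun i => χ i + t * ((v i : ℤ):ℚ)) (icast c2)
            = dotQ χ (icast c2) + t * ((dotZ v c2 : ℤ):ℚ) := by
          simp only [dotQ, dotZ, icast]; push_cast; ring
        rw [expand, (by rw [hv]; exact ortho2 c1 c2 : dotZ v c2 = 0), hn]
        push_cast
        ring
      · show Mid (χ 1 + t * ((v 1 : ℤ):ℚ))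
        have : χ 1 + t * ((v 1 : ℤ):ℚ) = 1/2 := by
          rw [htdef]
          field_simp
          ring
        rw [this]
        exact mid_half
      · show Mid (χ 2 + t * ((v 2 : ℤ):ℚ))
        rw [hv2]
        simpa using i3
    · -- generic case : v 1 ≠ 0 and v 2 ≠ 0
      obtain ⟨t, ht1, ht2⟩ := twospeed (v 1) (v 2) hv1 hv2
      refine ⟨fun i => t * ((v i : ℤ):ℚ), ⟨0, ?_⟩, ⟨0, ?_⟩, ht1, ht2⟩
      · have expand : dotQ (fun i => t * ((v i : ℤ):ℚ)) (icast c1)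
            = t * ((dotZ v c1 : ℤ):ℚ) := by
          simp only [dotQ, dotZ, icast]; push_cast; ring
        rw [expand, (by rw [hv]; exact ortho1 c1 c2 : dotZ v c1 = 0)]
        norm_num
      · have expand : dotQ (fun i => t * ((v i : ℤ):ℚ)) (icast c2)
            = t * ((dotZ v c2 : ℤ):ℚ) := by
          simp only [dotQ, dotZ, icast]; push_cast; ring
        rw [expand, (by rw [hv]; exact ortho2 c1 c2 : dotZ v c2 = 0)]
        norm_num

lemma exists_alpha (c1 c2 : Fin 3 → ℤ)
    (h30 : 3 ∣ c1 0) (h30' : 3 ∣ c2 0)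
    (hrow : ∀ i : Fin 3, c1 i ≠ 0 ∨ c2 i ≠ 0)
    (h1 : ¬ ∃ a b : ℤ, ∀ i, (Pi.single 1 1 : Fin 3 → ℤ) i = a * c1 i + b * c2 i)
    (h2 : ¬ ∃ a b : ℤ, ∀ i, (Pi.single 2 1 : Fin 3 → ℤ) i = a * c1 i + b * c2 i) :
    ∃ α : Fin 3 → ℚ, IsInt (dotQ α (icast c1)) ∧ IsInt (dotQ α (icast c2)) ∧
      ∀ i, Mid (α i) := by
  obtain ⟨β, ⟨n1, hn1⟩, ⟨n2, hn2⟩, hm1, hm2⟩ := exists_beta c1 c2 hrow h1 h2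
  obtain ⟨j, hj⟩ := mid_shift (β 0)
  obtain ⟨k1, hk1⟩ := h30
  obtain ⟨k2, hk2⟩ := h30'
  refine ⟨fun i => if i = 0 then β 0 + (j:ℚ)/3 else β i, ?_, ?_, ?_⟩
  · refine ⟨n1 + j * k1, ?_⟩
    have expand : dotQ (fun i => if i = 0 then β 0 + (j:ℚ)/3 else β i) (icast c1)
        = dotQ β (icast c1) + (j:ℚ)/3 * ((c1 0 : ℤ):ℚ) := by
      simp only [dotQ, icast, if_true,
        if_neg (show (1:Fin 3) ≠ 0 by decide), if_neg (show (2:Fin 3) ≠ 0 by decide)]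
      ring
    rw [expand, hn1, hk1]
    push_cast
    ring
  · refine ⟨n2 + j * k2, ?_⟩
    have expand : dotQ (fun i => if i = 0 then β 0 + (j:ℚ)/3 else β i) (icast c2)
        = dotQ β (icast c2) + (j:ℚ)/3 * ((c2 0 : ℤ):ℚ) := by
      simp only [dotQ, icast, if_true,
        if_neg (show (1:Fin 3) ≠ 0 by decide), if_neg (show (2:Fin 3) ≠ 0 by decide)]
      ring
    rw [expand, hn2, hk2]
    push_cast
    ring
  · intro i
    fin_cases i
    · simpa using hj
    · simpa using hm1
    · simpa using hm2


theorem three_divisible_row_lemma (k₁ k₂ y21 y22 y31 y32 : ℤ)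
    (M : Matrix (Fin 3) (Fin 2) ℤ)
    (hMdef : M = !![3 * k₁, 3 * k₂; y21, y22; y31, y32])
    (hrows : ∀ i, ∃ j, M i j ≠ 0)
    (hloops : NoLoops M) :
    (SACG M).chromaticNumber ≤ 3 := by
  classical
  set c1 : Fin 3 → ℤ := fun i => M i 0 with hc1
  set c2 : Fin 3 → ℤ := fun i => M i 1 with hc2
  -- columns generate the subgroup
  have hc1mem : c1 ∈ colSubgroup M :=
    AddSubgroup.subset_closure ⟨0, rfl⟩
  have hc2mem : c2 ∈ colSubgroup M :=
    AddSubgroup.subset_closure ⟨1, rfl⟩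
  have hcomb : ∀ (a b : ℤ) (x : Fin 3 → ℤ), (∀ i, x i = a * c1 i + b * c2 i) →
      x ∈ colSubgroup M := by
    intro a b x hx
    have : x = a • c1 + b • c2 := by
      funext i
      simp [Pi.add_apply, Pi.smul_apply, smul_eq_mul, hx i]
    rw [this]
    exact AddSubgroup.add_mem _ (AddSubgroup.zsmul_mem _ hc1mem a)
      (AddSubgroup.zsmul_mem _ hc2mem b)
  have h30 : 3 ∣ c1 0 := ⟨k₁, by rw [hc1, hMdef]; simp⟩
  have h30' : 3 ∣ c2 0 := ⟨k₂, by rw [hc2, hMdef]; simp⟩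
  have hrow : ∀ i : Fin 3, c1 i ≠ 0 ∨ c2 i ≠ 0 := by
    intro i
    obtain ⟨j, hj⟩ := hrows i
    fin_cases j
    · exact Or.inl hj
    · exact Or.inr hj
  have h1 : ¬ ∃ a b : ℤ, ∀ i, (Pi.single 1 1 : Fin 3 → ℤ) i = a * c1 i + b * c2 i := by
    rintro ⟨a, b, hab⟩
    exact hloops 1 (hcomb a b _ hab)
  have h2 : ¬ ∃ a b : ℤ, ∀ i, (Pi.single 2 1 : Fin 3 → ℤ) i = a * c1 i + b * c2 i := by
    rintro ⟨a, b, hab⟩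
    exact hloops 2 (hcomb a b _ hab)
  obtain ⟨α, hi1, hi2, hmid⟩ := exists_alpha c1 c2 h30 h30' hrow h1 h2
  -- the potential function
  set φ : (Fin 3 → ℤ) → ℚ := fun x => dotQ α (icast x) with hφ
  have φ_sub : ∀ x y, φ (x - y) = φ x - φ y := by
    intro x y
    simp only [hφ, dotQ, icast, Pi.sub_apply]
    push_cast
    ring
  have φ_add : ∀ x y, φ (x + y) = φ x + φ y := by
    intro x y
    simp only [hφ, dotQ, icast, Pi.add_apply]
    push_cast
    ring
  have φ_neg : ∀ x, φ (-x) = - φ x := by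
    intro x
    simp only [hφ, dotQ, icast, Pi.neg_apply]
    push_cast
    ring
  have φ_single : ∀ i : Fin 3, φ (Pi.single i 1) = α i := by
    intro i
    fin_cases i <;>
      · simp only [hφ, dotQ, icast, Pi.single_apply, Fin.ext_iff]
        norm_num
        try rfl
  have hφH : ∀ h ∈ colSubgroup M, IsInt (φ h) := by
    intro h hh
    induction hh using AddSubgroup.closure_induction with
    | mem x hx =>
        obtain ⟨j, hj⟩ := hx
        fin_cases j
        · rw [← hj]; exact hi1
        · rw [← hj]; exact hi2
    | zero =>
        refine ⟨0, ?_⟩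
        simp only [hφ, dotQ, icast]
        norm_num
    | add x y hx hy ihx ihy =>
        obtain ⟨n, hn⟩ := ihx
        obtain ⟨m, hm⟩ := ihy
        exact ⟨n + m, by rw [φ_add, hn, hm]; push_cast; ring⟩
    | neg x hx ihx =>
        obtain ⟨n, hn⟩ := ihx
        exact ⟨-n, by rw [φ_neg, hn]; push_cast; ring⟩
  -- the coloring
  have hwd : ∀ a b : Fin 3 → ℤ, (QuotientAddGroup.leftRel (colSubgroup M)) a b →
      third (φ a) = third (φ b) := by
    intro a b hab
    rw [QuotientAddGroup.leftRel_apply] at hab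
    obtain ⟨n, hn⟩ := hφH _ hab
    rw [φ_add, φ_neg] at hn
    apply third_eq_of_fract_eq
    have : φ a = φ b + ((-n : ℤ):ℚ) := by push_cast; linarith
    rw [this, Int.fract_add_intCast]
  set C : ((Fin 3 → ℤ) ⧸ colSubgroup M) → Fin 3 :=
    fun x => Quotient.liftOn' x (fun a => third (φ a)) hwd with hC
  have hCmk : ∀ a : Fin 3 → ℤ, C (QuotientAddGroup.mk a) = third (φ a) := fun a => rfl
  have hvalid : ∀ {v w}, (SACG M).Adj v w → C v ≠ C w := by
    intro v w hadj
    obtain ⟨hne, i, hcase⟩ := (hadj : v ≠ w ∧ ∃ i : Fin 3, v - w = QuotientAddGroup.mk (Pi.single i 1) ∨ v - w = -QuotientAddGroup.mk (Pi.single i 1))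
    induction v using QuotientAddGroup.induction_on with | H a =>
    induction w using QuotientAddGroup.induction_on with | H b =>
    rw [hCmk, hCmk]
    have hmksub : (QuotientAddGroup.mk a - QuotientAddGroup.mk b :
        (Fin 3 → ℤ) ⧸ colSubgroup M) = QuotientAddGroup.mk (a - b) := rfl
    have hmkneg : (-(QuotientAddGroup.mk (Pi.single i 1)) :
        (Fin 3 → ℤ) ⧸ colSubgroup M) = QuotientAddGroup.mk (-(Pi.single i 1)) := rfl
    rcases hcase with hcase | hcase
    · rw [hmksub] at hcase
      have hmem : (a - b) - Pi.single i 1 ∈ colSubgroup M :=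
        QuotientAddGroup.eq_iff_sub_mem.mp hcase
      obtain ⟨n, hn⟩ := hφH _ hmem
      rw [φ_sub, φ_sub, φ_single] at hn
      apply third_ne
      have heq : φ a - φ b = α i + (n:ℚ) := by linarith
      exact mid_of_fract_eq (by rw [heq, Int.fract_add_intCast]) (hmid i)
    · rw [hmksub, hmkneg] at hcase
      have hmem : (a - b) - (-(Pi.single i 1)) ∈ colSubgroup M :=
        QuotientAddGroup.eq_iff_sub_mem.mp hcase
      obtain ⟨n, hn⟩ := hφH _ hmem
      rw [φ_sub, φ_sub, φ_neg, φ_single] at hn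
      apply third_ne
      have heq : φ a - φ b = -(α i) + (n:ℚ) := by linarith
      exact mid_of_fract_eq (by rw [heq, Int.fract_add_intCast]) (mid_neg (hmid i))
  have hcol : (SACG M).Colorable 3 := ⟨SimpleGraph.Coloring.mk C hvalid⟩
  have := hcol.chromaticNumber_le
  simpa using this
end
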